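/- Let f : E(K_n^r) → [-1,1] satisfy Σ_A f(A) = 0, where K_n^r is the complete r-uniform hypergraph on n vertices. Then there exist f' : E(K_n^r) → [-1,1] and a partition V = P ∪ N such that Σ_A f'(A) = 0, min_v |Σ_{A ∋ v} f'(A)| ≥ min_v |Σ_{A ∋ v} f(A)|, and f'(A) depends only on |A ∩ P|. -/
import Mathlib


open Finset

noncomputable section

/-- The edge set of the complete r-uniform hypergraph on `Fin n`: all
r-element subsets. -/
def Edges (n r : ℕ) : Finset (Finset (Fin n)) :=
  Finset.powersetCard r Finset.univ

/-- Lemma compave: averaging reduction for the complete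
hypergraph. -/
theorem stmt13 {n r : ℕ} (f : Finset (Fin n) → ℝ)
    (hf : ∀ A ∈ Edges n r, f A ∈ Set.Icc (-1 : ℝ) 1)
    (hsum : ∑ A ∈ Edges n r, f A = 0) :
    ∃ (f' : Finset (Fin n) → ℝ) (P : Finset (Fin n)),
      (∀ A ∈ Edges n r, f' A ∈ Set.Icc (-1 : ℝ) 1) ∧
      (∑ A ∈ Edges n r, f' A = 0) ∧
      (⨅ v : Fin n, |∑ A ∈ (Edges n r).filter (fun A => v ∈ A), f A|)
        ≤ (⨅ v : Fin n, |∑ A ∈ (Edges n r).filter (fun A => v ∈ A), f' A|) ∧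
      (∀ A ∈ Edges n r, ∀ B ∈ Edges n r,
        (A ∩ P).card = (B ∩ P).card → f' A = f' B) := by
  classical
  rcases Nat.eq_zero_or_pos n with hn | hn
  · -- n = 0 case : all edges are equal (Finset (Fin 0) has ≤ 1 elt essentially)
    subst hn
    refine ⟨f, ∅, hf, hsum, le_refl _, ?_⟩
    intro A hA B hB _
    have : A = B := by
      have hA0 : A = ∅ := Finset.eq_empty_of_forall_notMem (fun x => x.elim0)
      have hB0 : B = ∅ := Finset.eq_empty_of_forall_notMem (fun x => x.elim0)
      rw [hA0, hB0]
    rw [this]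
  · have hne : Nonempty (Fin n) := ⟨⟨0, hn⟩⟩
    set E := Edges n r with hE
    set d : Fin n → ℝ := fun v => ∑ A ∈ E.filter (fun A => v ∈ A), f A with hd
    set P : Finset (Fin n) := univ.filter (fun v => 0 ≤ d v) with hP
    set C : ℕ → Finset (Finset (Fin n)) :=
      fun k => E.filter (fun A => (A ∩ P).card = k) with hC
    set f' : Finset (Fin n) → ℝ :=
      fun A => (∑ B ∈ C (A ∩ P).card, f B) / ((C (A ∩ P).card).card : ℝ) with hf'
    have hAcard : ∀ A ∈ E, A.card = r := by
      intro A hA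
      exact (Finset.mem_powersetCard.mp hA).2
    have hmemC : ∀ A ∈ E, A ∈ C (A ∩ P).card := by
      intro A hA
      simp [hC, hA]
    have hCpos : ∀ A ∈ E, 0 < ((C (A ∩ P).card).card : ℝ) := by
      intro A hA
      exact_mod_cast Finset.card_pos.mpr ⟨A, hmemC A hA⟩
    have hkle : ∀ A ∈ E, (A ∩ P).card ∈ Finset.range (r + 1) := by
      intro A hA
      rw [Finset.mem_range, Nat.lt_succ_iff]
      calc (A ∩ P).card ≤ A.card := Finset.card_le_card Finset.inter_subset_left
        _ = r := hAcard A hA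
    -- f' is constant with value f' A on C (A∩P).card ; sums match on fibers
    have hconstC : ∀ k, ∀ A ∈ C k, f' A = (∑ B ∈ C k, f B) / ((C k).card : ℝ) := by
      intro k A hA
      have : (A ∩ P).card = k := (Finset.mem_filter.mp hA).2
      rw [hf']
      simp only [this]
    have hsumC : ∀ k, ∑ A ∈ C k, f' A = ∑ A ∈ C k, f A := by
      intro k
      rcases Finset.eq_empty_or_nonempty (C k) with h | h
      · simp [h]
      · have hcard : (0:ℝ) < ((C k).card : ℝ) := by exact_mod_cast Finset.card_pos.mpr h
        rw [Finset.sum_congr rfl (hconstC k)]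
        rw [Finset.sum_const, nsmul_eq_mul]
        field_simp
    -- weighted version: any function of (A ∩ P).card
    have hw : ∀ c : ℕ → ℝ,
        ∑ A ∈ E, c (A ∩ P).card * f' A = ∑ A ∈ E, c (A ∩ P).card * f A := by
      intro c
      rw [← Finset.sum_fiberwise_of_maps_to hkle (fun A => c (A ∩ P).card * f' A),
          ← Finset.sum_fiberwise_of_maps_to hkle (fun A => c (A ∩ P).card * f A)]
      refine Finset.sum_congr rfl (fun k _ => ?_)
      have h1 : ∀ A ∈ C k, c (A ∩ P).card * f' A = c k * f' A := by
        intro A hA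
        rw [(Finset.mem_filter.mp hA).2]
      have h2 : ∀ A ∈ C k, c (A ∩ P).card * f A = c k * f A := by
        intro A hA
        rw [(Finset.mem_filter.mp hA).2]
      rw [Finset.sum_congr rfl h1, Finset.sum_congr rfl h2, ← Finset.mul_sum,
          ← Finset.mul_sum, hsumC]
    -- bounds
    have hbd : ∀ A ∈ E, f' A ∈ Set.Icc (-1 : ℝ) 1 := by
      intro A hA
      have hpos := hCpos A hA
      rw [Set.mem_Icc, ← abs_le]
      rw [hf', abs_div, abs_of_pos hpos, div_le_one hpos]
      calc |∑ B ∈ C (A ∩ P).card, f B| ≤ ∑ B ∈ C (A ∩ P).card, |f B| :=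
            Finset.abs_sum_le_sum_abs _ _
        _ ≤ ∑ B ∈ C (A ∩ P).card, 1 := by
            refine Finset.sum_le_sum (fun B hB => ?_)
            have := hf B (Finset.mem_filter.mp hB).1
            rw [abs_le]
            exact ⟨this.1, this.2⟩
        _ = ((C (A ∩ P).card).card : ℝ) := by simp
    -- total sum
    have hsum' : ∑ A ∈ E, f' A = 0 := by
      have := hw (fun _ => 1)
      simpa [hsum] using this
    -- degree of f'
    set d' : Fin n → ℝ := fun v => ∑ A ∈ E.filter (fun A => v ∈ A), f' A with hd'
    -- double counting over any vertex set S : sum of degrees over S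
    have hdouble : ∀ (S : Finset (Fin n)) (g : Finset (Fin n) → ℝ),
        ∑ w ∈ S, (∑ A ∈ E.filter (fun A => w ∈ A), g A)
          = ∑ A ∈ E, ((A ∩ S).card : ℝ) * g A := by
      intro S g
      have : ∀ w ∈ S, ∑ A ∈ E.filter (fun A => w ∈ A), g A
          = ∑ A ∈ E, if w ∈ A then g A else 0 := by
        intro w _
        rw [Finset.sum_filter]
      rw [Finset.sum_congr rfl this, Finset.sum_comm]
      refine Finset.sum_congr rfl (fun A _ => ?_)
      rw [Finset.sum_ite_mem, Finset.sum_const, nsmul_eq_mul]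
      congr 1
      rw [Finset.inter_comm]
    -- constancy of d' within P and within Pᶜ
    have hswap : ∀ v w : Fin n, (v ∈ P ↔ w ∈ P) → d' v = d' w := by
      intro v w hvw
      set σ := Equiv.swap v w with hσ
      have hPσ : ∀ x : Fin n, σ x ∈ P ↔ x ∈ P := by
        intro x
        rcases eq_or_ne x v with h | h
        · subst h; rw [hσ, Equiv.swap_apply_left]; exact hvw.symm
        · rcases eq_or_ne x w with h2 | h2
          · subst h2; rw [hσ, Equiv.swap_apply_right]; exact hvw
          · rw [hσ, Equiv.swap_apply_of_ne_of_ne h h2]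
      have hPimg : Finset.image σ P = P := by
        apply Finset.eq_of_subset_of_card_le
        · intro x hx
          rw [Finset.mem_image] at hx
          obtain ⟨a, ha, rfl⟩ := hx
          exact (hPσ a).mpr ha
        · rw [Finset.card_image_of_injective _ σ.injective]
      have hinterσ : ∀ A : Finset (Fin n),
          ((Finset.image σ A) ∩ P).card = (A ∩ P).card := by
        intro A
        rw [← hPimg, ← Finset.image_inter _ _ σ.injective,
            Finset.card_image_of_injective _ σ.injective, hPimg]
      have hf'σ : ∀ A : Finset (Fin n), f' (Finset.image σ A) = f' A := by
        intro A
        rw [hf']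
        simp only [hinterσ]
      have hEσ : ∀ A ∈ E, Finset.image σ A ∈ E := by
        intro A hA
        rw [hE, Edges, Finset.mem_powersetCard]
        exact ⟨Finset.subset_univ _,
          by rw [Finset.card_image_of_injective _ σ.injective]; exact hAcard A hA⟩
      rw [hd']
      refine Finset.sum_nbij' (i := fun A => Finset.image σ A)
        (j := fun A => Finset.image σ A) ?_ ?_ ?_ ?_ ?_
      · intro A hA
        rw [Finset.mem_filter] at hA ⊢
        refine ⟨hEσ A hA.1, ?_⟩
        rw [Finset.mem_image]
        exact ⟨v, hA.2, Equiv.swap_apply_left v w⟩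
      · intro A hA
        rw [Finset.mem_filter] at hA ⊢
        refine ⟨hEσ A hA.1, ?_⟩
        rw [Finset.mem_image]
        exact ⟨w, hA.2, Equiv.swap_apply_right v w⟩
      · intro A _
        simp only [Finset.image_image]
        simp [hσ, Function.comp_def]
      · intro A _
        simp only [Finset.image_image]
        simp [hσ, Function.comp_def]
      · intro A _
        exact (hf'σ A).symm
    -- bddBelow for ciInf
    have hbdd : BddBelow (Set.range fun v : Fin n =>
        |∑ A ∈ E.filter (fun A => v ∈ A), f A|) := Set.Finite.bddBelow (Set.finite_range _)
    have hinf_le : ∀ v : Fin n,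
        (⨅ v : Fin n, |d v|) ≤ |d v| := fun v => ciInf_le hbdd v
    have hinf_nonneg : 0 ≤ ⨅ v : Fin n, |d v| :=
      le_ciInf (fun v => abs_nonneg _)
    -- main pointwise estimate
    have hmain : ∀ v : Fin n, (⨅ v : Fin n, |d v|) ≤ |d' v| := by
      intro v
      by_cases hv : v ∈ P
      · -- v in P : all degrees in P are ≥ 0
        have hconst : ∀ w ∈ P, d' w = d' v := by
          intro w hw'
          exact hswap w v ⟨fun _ => hv, fun _ => hw'⟩
        have hPid : ∑ w ∈ P, d' w = ∑ w ∈ P, d w := by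
          rw [hd', hd, hdouble P f', hdouble P f]
          exact hw (fun k => (k : ℝ))
        have hcardP : (0:ℝ) < (P.card : ℝ) := by
          exact_mod_cast Finset.card_pos.mpr ⟨v, hv⟩
        have hdP : ∀ w ∈ P, 0 ≤ d w := by
          intro w hw'
          exact (Finset.mem_filter.mp hw').2
        have h1 : (P.card : ℝ) * d' v = ∑ w ∈ P, d w := by
          rw [← hPid, Finset.sum_congr rfl hconst, Finset.sum_const, nsmul_eq_mul]
        have h2 : (P.card : ℝ) * (⨅ v : Fin n, |d v|) ≤ ∑ w ∈ P, d w := by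
          calc (P.card : ℝ) * (⨅ v : Fin n, |d v|)
              = ∑ _w ∈ P, (⨅ v : Fin n, |d v|) := by
                rw [Finset.sum_const, nsmul_eq_mul]
            _ ≤ ∑ w ∈ P, d w := by
                refine Finset.sum_le_sum (fun w hw' => ?_)
                calc (⨅ v : Fin n, |d v|) ≤ |d w| := hinf_le w
                  _ = d w := abs_of_nonneg (hdP w hw')
        have h3 : (⨅ v : Fin n, |d v|) ≤ d' v := by
          have := h2.trans_eq h1.symm
          exact le_of_mul_le_mul_left this hcardP
        have h4 : 0 ≤ d' v := le_trans hinf_nonneg h3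
        rw [abs_of_nonneg h4]
        exact h3
      · -- v not in P : all degrees outside P are < 0
        set N : Finset (Fin n) := Pᶜ with hN
        have hvN : v ∈ N := by rw [hN, Finset.mem_compl]; exact hv
        have hconst : ∀ w ∈ N, d' w = d' v := by
          intro w hw'
          refine hswap w v ⟨fun h => absurd h ?_, fun h => absurd h hv⟩
          rw [hN, Finset.mem_compl] at hw'
          exact hw'
        have hcompl : ∀ A ∈ E, ((A ∩ N).card : ℝ) = (r : ℝ) - ((A ∩ P).card : ℝ) := by
          intro A hA
          have hsd : A ∩ N = A \ P := by
            rw [hN]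
            ext x
            simp [Finset.mem_compl, Finset.mem_sdiff]
          have hkey : (A \ P).card + (A ∩ P).card = A.card :=
            Finset.card_sdiff_add_card_inter A P
          rw [hsd]
          have hr := hAcard A hA
          have hc : ((A \ P).card : ℝ) + ((A ∩ P).card : ℝ) = (A.card : ℝ) := by
            exact_mod_cast hkey
          rw [hr] at hc
          linarith
        have hNid : ∑ w ∈ N, d' w = ∑ w ∈ N, d w := by
          rw [hd', hd, hdouble N f', hdouble N f]
          calc ∑ A ∈ E, ((A ∩ N).card : ℝ) * f' A
              = ∑ A ∈ E, ((r : ℝ) - ((A ∩ P).card : ℝ)) * f' A := by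
                refine Finset.sum_congr rfl (fun A hA => ?_)
                rw [hcompl A hA]
            _ = ∑ A ∈ E, ((r : ℝ) - ((A ∩ P).card : ℝ)) * f A :=
                hw (fun k => (r : ℝ) - (k : ℝ))
            _ = ∑ A ∈ E, ((A ∩ N).card : ℝ) * f A := by
                refine Finset.sum_congr rfl (fun A hA => ?_)
                rw [hcompl A hA]
        have hcardN : (0:ℝ) < (N.card : ℝ) := by
          exact_mod_cast Finset.card_pos.mpr ⟨v, hvN⟩
        have hdN : ∀ w ∈ N, d w ≤ 0 := by
          intro w hw'
          rw [hN, Finset.mem_compl, hP, Finset.mem_filter] at hw'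
          push_neg at hw'
          exact le_of_lt (hw' (Finset.mem_univ w))
        have h1 : (N.card : ℝ) * d' v = ∑ w ∈ N, d w := by
          rw [← hNid, Finset.sum_congr rfl hconst, Finset.sum_const, nsmul_eq_mul]
        have h2 : (N.card : ℝ) * (⨅ v : Fin n, |d v|) ≤ ∑ w ∈ N, -(d w) := by
          calc (N.card : ℝ) * (⨅ v : Fin n, |d v|)
              = ∑ _w ∈ N, (⨅ v : Fin n, |d v|) := by
                rw [Finset.sum_const, nsmul_eq_mul]
            _ ≤ ∑ w ∈ N, -(d w) := by
                refine Finset.sum_le_sum (fun w hw' => ?_)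
                calc (⨅ v : Fin n, |d v|) ≤ |d w| := hinf_le w
                  _ = -(d w) := abs_of_nonpos (hdN w hw')
        have h1' : (N.card : ℝ) * (-(d' v)) = ∑ w ∈ N, -(d w) := by
          rw [Finset.sum_neg_distrib, ← h1]
          ring
        have h3 : (⨅ v : Fin n, |d v|) ≤ -(d' v) := by
          have := h2.trans_eq h1'.symm
          exact le_of_mul_le_mul_left this hcardN
        have h4 : d' v ≤ 0 := by
          nlinarith [hinf_nonneg]
        rw [abs_of_nonpos h4]
        exact h3
    refine ⟨f', P, hbd, hsum', ?_, ?_⟩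
    · exact le_ciInf hmain
    · intro A _ B _ h
      rw [hf']
      simp only [h]
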